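/- Let n ≥ 5 and let G be a connected simple graph on n vertices such that the multiplicity of the largest distance Laplacian eigenvalue of G equals n−3. Then G contains no induced subgraph isomorphic to the path P_5 on 5 vertices. -/

import Mathlib

open Matrix

/-- The distance Laplacian matrix of a graph: diagonal entries are the transmissions
`Tr(v) = ∑ u, d(v,u)`, off-diagonal entries are `-d(u,v)`. -/
noncomputable def distLaplacian {V : Type*} [Fintype V] [DecidableEq V]
    (G : SimpleGraph V) : Matrix V V ℝ :=
  Matrix.of fun i j => if i = j then ∑ k : V, (G.dist i k : ℝ) else -(G.dist i j : ℝ)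

/-- The multiplicity of `μ` as an eigenvalue of `M`, i.e. the dimension of the
corresponding eigenspace. -/
noncomputable def eigMult {V : Type*} [Fintype V] (M : Matrix V V ℝ) (μ : ℝ) : ℕ :=
  Module.finrank ℝ (Module.End.eigenspace M.mulVecLin μ)

/-- The largest eigenvalue of a matrix. -/
noncomputable def lambdaMax {V : Type*} [Fintype V] (M : Matrix V V ℝ) : ℝ :=
  sSup {μ : ℝ | Module.End.HasEigenvalue M.mulVecLin μ}

/-- The transmission of a vertex. -/
noncomputable def transmission {V : Type*} [Fintype V] (G : SimpleGraph V) (v : V) : ℕ :=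
  ∑ u : V, G.dist v u

namespace NoP5Aux

variable {n : ℕ}


lemma distLap_isHermitian (G : SimpleGraph (Fin n)) : (distLaplacian G).IsHermitian := by
  ext i j
  simp only [distLaplacian, Matrix.conjTranspose_apply, Matrix.of_apply, star_trivial]
  by_cases h : i = j
  · simp [h]
  · simp [h, Ne.symm h, SimpleGraph.dist_comm]

lemma quad_le_aux (M : Matrix (Fin n) (Fin n) ℝ) (x : Fin n → ℝ) :
    x ⬝ᵥ (M *ᵥ x) ≤ (∑ i, ∑ j, |M i j|) * (x ⬝ᵥ x) := by
  have h3 : ∀ k : Fin n, x k ^ 2 ≤ x ⬝ᵥ x := by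
    intro k
    have h := Finset.single_le_sum (f := fun l => x l * x l)
      (fun l _ => mul_self_nonneg (x l)) (Finset.mem_univ k)
    simpa [dotProduct, sq] using h
  have hxx : ∀ i j : Fin n, |x i * x j| ≤ x ⬝ᵥ x := by
    intro i j
    have h2 : |x i * x j| ≤ (x i ^ 2 + x j ^ 2) / 2 := by
      rw [abs_mul]
      nlinarith [sq_nonneg (|x i| - |x j|), sq_abs (x i), sq_abs (x j)]
    linarith [h3 i, h3 j]
  unfold dotProduct Matrix.mulVec
  calc ∑ i, x i * (∑ j, M i j * x j) = ∑ i, ∑ j, x i * (M i j * x j) := by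
        simp_rw [Finset.mul_sum]
    _ ≤ ∑ i, ∑ j, |M i j| * (x ⬝ᵥ x) := by
        apply Finset.sum_le_sum; intro i _
        apply Finset.sum_le_sum; intro j _
        have : x i * (M i j * x j) = M i j * (x i * x j) := by ring
        rw [this]
        calc M i j * (x i * x j) ≤ |M i j * (x i * x j)| := le_abs_self _
          _ = |M i j| * |x i * x j| := abs_mul _ _
          _ ≤ |M i j| * (x ⬝ᵥ x) := by
              exact mul_le_mul_of_nonneg_left (hxx i j) (abs_nonneg _)
    _ = (∑ i, ∑ j, |M i j|) * (x ⬝ᵥ x) := by rw [Finset.sum_mul]; simp_rw [Finset.sum_mul]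

lemma bddAbove_eigs (M : Matrix (Fin n) (Fin n) ℝ) :
    BddAbove {μ : ℝ | Module.End.HasEigenvalue M.mulVecLin μ} := by
  refine ⟨∑ i, ∑ j, |M i j|, ?_⟩
  rintro μ hμ
  obtain ⟨v, hv⟩ := Module.End.HasEigenvalue.exists_hasEigenvector hμ
  have hv1 : M *ᵥ v = μ • v := by
    have := hv.1
    rw [Module.End.mem_eigenspace_iff] at this
    simpa [Matrix.mulVecLin_apply] using this
  have hv0 : v ≠ 0 := hv.2
  obtain ⟨i0, hi0⟩ : ∃ i0 : Fin n, ∀ j, |v j| ≤ |v i0| := by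
    obtain ⟨i, hi⟩ : ∃ i, v i ≠ 0 := Function.ne_iff.mp hv0
    obtain ⟨i0, _, h⟩ := Finset.exists_max_image Finset.univ (fun k => |v k|) ⟨i, Finset.mem_univ i⟩
    exact ⟨i0, fun j => h j (Finset.mem_univ j)⟩
  have hvi0 : 0 < |v i0| := by
    obtain ⟨i, hi⟩ : ∃ i, v i ≠ 0 := Function.ne_iff.mp hv0
    exact lt_of_lt_of_le (abs_pos.mpr hi) (hi0 i)
  have hrow : μ * v i0 = ∑ j, M i0 j * v j := by
    have := congrFun hv1 i0
    simpa [Matrix.mulVec, dotProduct, Pi.smul_apply, smul_eq_mul] using this.symm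
  have habs : |μ| * |v i0| ≤ (∑ j, |M i0 j|) * |v i0| := by
    rw [← abs_mul, hrow]
    calc |∑ j, M i0 j * v j| ≤ ∑ j, |M i0 j * v j| := Finset.abs_sum_le_sum_abs _ _
      _ ≤ ∑ j, |M i0 j| * |v i0| := by
          apply Finset.sum_le_sum; intro j _
          rw [abs_mul]
          exact mul_le_mul_of_nonneg_left (hi0 j) (abs_nonneg _)
      _ = (∑ j, |M i0 j|) * |v i0| := by rw [Finset.sum_mul]
  have h1 : |μ| ≤ ∑ j, |M i0 j| := le_of_mul_le_mul_right habs hvi0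
  have h2 : (∑ j, |M i0 j|) ≤ ∑ i, ∑ j, |M i j| := by
    apply Finset.single_le_sum (f := fun i => ∑ j, |M i j|) _ (Finset.mem_univ i0)
    intro i _
    exact Finset.sum_nonneg fun j _ => abs_nonneg _
  calc μ ≤ |μ| := le_abs_self μ
    _ ≤ _ := le_trans h1 h2

lemma inner_eq_dot (a b : EuclideanSpace ℝ (Fin n)) :
    (inner ℝ a b : ℝ) = (WithLp.equiv 2 _ a) ⬝ᵥ (WithLp.equiv 2 _ b) := by
  rw [PiLp.inner_apply]
  simp [dotProduct, RCLike.inner_apply, WithLp.equiv]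
  exact Finset.sum_congr rfl fun i _ => mul_comm _ _

lemma rayleigh_le (M : Matrix (Fin n) (Fin n) ℝ) (hM : M.IsHermitian) (hn : 0 < n)
    (z : Fin n → ℝ) : z ⬝ᵥ (M *ᵥ z) ≤ lambdaMax M * (z ⬝ᵥ z) := by
  by_cases hz : z = 0
  · simp [hz]
  haveI : Nonempty (Fin n) := ⟨⟨0, hn⟩⟩
  haveI : Nontrivial (EuclideanSpace ℝ (Fin n)) := by
    refine ⟨0, (WithLp.equiv 2 _).symm z, fun h => hz ?_⟩
    have := congrArg (WithLp.equiv 2 (Fin n → ℝ)) h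
    simpa using this.symm
  set T : EuclideanSpace ℝ (Fin n) →ₗ[ℝ] EuclideanSpace ℝ (Fin n) := Matrix.toEuclideanLin M with hT
  have hTsymm : T.IsSymmetric := (Matrix.isHermitian_iff_isSymmetric).mp hM
  set μ : ℝ := ⨆ x : { x : EuclideanSpace ℝ (Fin n) // x ≠ 0 },
      RCLike.re (inner ℝ (T x) (x : EuclideanSpace ℝ (Fin n)) : ℝ) / ‖(x : EuclideanSpace ℝ (Fin n))‖ ^ 2 with hμ
  have heig : Module.End.HasEigenvalue T μ := by
    have := hTsymm.hasEigenvalue_iSup_of_finiteDimensional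
    exact this
  -- transfer eigenvalue to mulVecLin
  have heig' : Module.End.HasEigenvalue (Matrix.mulVecLin M) μ := by
    obtain ⟨v, hv⟩ := Module.End.HasEigenvalue.exists_hasEigenvector heig
    have hv1 : T v = μ • v := Module.End.mem_eigenspace_iff.mp hv.1
    refine Module.End.hasEigenvalue_of_hasEigenvector
      (x := WithLp.equiv 2 _ v) ⟨Module.End.mem_eigenspace_iff.mpr ?_, fun h => hv.2 ?_⟩
    · have := congrArg (WithLp.equiv 2 (Fin n → ℝ)) hv1
      simpa [hT, Matrix.toEuclideanLin_apply, Matrix.mulVecLin_apply] using this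
    · have := congrArg (WithLp.equiv 2 (Fin n → ℝ)).symm h
      simpa using this
  have hμle : μ ≤ lambdaMax M := le_csSup (bddAbove_eigs M) heig'
  -- Rayleigh quotient of z is at most μ
  set zE : EuclideanSpace ℝ (Fin n) := (WithLp.equiv 2 _).symm z with hzE
  have hzE0 : zE ≠ 0 := by
    intro h
    exact hz (by simpa [hzE] using congrArg (WithLp.equiv 2 (Fin n → ℝ)) h)
  have hbdd : BddAbove (Set.range fun x : { x : EuclideanSpace ℝ (Fin n) // x ≠ 0 } =>
      RCLike.re (inner ℝ (T x) (x : EuclideanSpace ℝ (Fin n)) : ℝ) / ‖(x : EuclideanSpace ℝ (Fin n))‖ ^ 2) := by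
    refine ⟨∑ i, ∑ j, |M i j|, ?_⟩
    rintro y ⟨⟨x, hx0⟩, rfl⟩
    simp only
    set xf : Fin n → ℝ := WithLp.equiv 2 _ x with hxf
    have hdot : RCLike.re (inner ℝ (T x) (x : EuclideanSpace ℝ (Fin n)) : ℝ) = xf ⬝ᵥ (M *ᵥ xf) := by
      rw [RCLike.re_to_real, inner_eq_dot]
      have : WithLp.equiv 2 (Fin n → ℝ) (T x) = M *ᵥ xf := rfl
      rw [this, dotProduct_comm]
    have hnorm : ‖x‖ ^ 2 = xf ⬝ᵥ xf := by
      have : (inner ℝ x x : ℝ) = ‖x‖ ^ 2 := real_inner_self_eq_norm_sq x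
      rw [← this, inner_eq_dot]
    have hxf0 : xf ≠ 0 := by
      intro h
      exact hx0 (by
        have := congrArg (WithLp.equiv 2 (Fin n → ℝ)).symm h
        simpa [hxf] using this)
    have hpos : 0 < xf ⬝ᵥ xf := by
      rcases lt_or_eq_of_le (Finset.sum_nonneg fun i (_ : i ∈ Finset.univ) => mul_self_nonneg (xf i)) with h' | h'
      · exact h'
      · exact absurd (dotProduct_self_eq_zero.mp h'.symm) hxf0
    rw [hdot, hnorm, div_le_iff₀ hpos]
    exact quad_le_aux M xf
  have hq : RCLike.re (inner ℝ (T zE) (zE : EuclideanSpace ℝ (Fin n)) : ℝ) / ‖zE‖ ^ 2 ≤ μ :=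
    le_ciSup hbdd (⟨zE, hzE0⟩ : { x : EuclideanSpace ℝ (Fin n) // x ≠ 0 })
  have hdot : RCLike.re (inner ℝ (T zE) (zE : EuclideanSpace ℝ (Fin n)) : ℝ) = z ⬝ᵥ (M *ᵥ z) := by
    rw [RCLike.re_to_real, inner_eq_dot]
    have h1 : WithLp.equiv 2 (Fin n → ℝ) (T zE) = M *ᵥ z := rfl
    have h2 : WithLp.equiv 2 (Fin n → ℝ) zE = z := rfl
    rw [h1, h2, dotProduct_comm]
  have hnorm : ‖zE‖ ^ 2 = z ⬝ᵥ z := by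
    have h0 : (inner ℝ zE zE : ℝ) = ‖zE‖ ^ 2 := real_inner_self_eq_norm_sq zE
    rw [← h0, inner_eq_dot]
    rfl
  have hpos : 0 < z ⬝ᵥ z := by
    rcases lt_or_eq_of_le (Finset.sum_nonneg fun i (_ : i ∈ Finset.univ) => mul_self_nonneg (z i)) with h' | h'
    · exact h'
    · exact absurd (dotProduct_self_eq_zero.mp h'.symm) hz
  rw [hdot, hnorm, div_le_iff₀ hpos] at hq
  calc z ⬝ᵥ (M *ᵥ z) ≤ μ * (z ⬝ᵥ z) := hq
    _ ≤ lambdaMax M * (z ⬝ᵥ z) := mul_le_mul_of_nonneg_right hμle (le_of_lt hpos)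

lemma mulVec_distLap (G : SimpleGraph (Fin n)) (x : Fin n → ℝ) (v : Fin n) :
    (distLaplacian G *ᵥ x) v
      = (∑ u, (G.dist v u : ℝ)) * x v - ∑ u, (G.dist v u : ℝ) * x u := by
  have key : ∀ u : Fin n, (distLaplacian G) v u * x u
      = (if v = u then (∑ k, (G.dist v k : ℝ)) * x u + (G.dist v u : ℝ) * x u else 0)
        - (G.dist v u : ℝ) * x u := by
    intro u
    by_cases h : v = u
    · subst h
      simp [distLaplacian, SimpleGraph.dist_self]
    · simp only [distLaplacian, Matrix.of_apply, if_neg h]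
      ring
  unfold Matrix.mulVec dotProduct
  rw [Finset.sum_congr rfl (fun u _ => key u), Finset.sum_sub_distrib]
  congr 1
  rw [Finset.sum_ite_eq Finset.univ v
    (fun u => (∑ k, (G.dist v k : ℝ)) * x u + (G.dist v u : ℝ) * x u)]
  simp [SimpleGraph.dist_self]

lemma sum_eq_zero_of_eig (G : SimpleGraph (Fin n)) (x : Fin n → ℝ) (lam : ℝ)
    (hx : distLaplacian G *ᵥ x = lam • x) (hlam : lam ≠ 0) : ∑ u, x u = 0 := by
  have h1 : lam * ∑ u, x u = 0 := by
    have h2 : ∀ v, lam * x v = (∑ u, (G.dist v u : ℝ)) * x v - ∑ u, (G.dist v u : ℝ) * x u := by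
      intro v
      rw [← mulVec_distLap, hx]
      simp
    calc lam * ∑ u, x u = ∑ v, lam * x v := Finset.mul_sum _ _ _
      _ = ∑ v, ((∑ u, (G.dist v u : ℝ)) * x v - ∑ u, (G.dist v u : ℝ) * x u) :=
          Finset.sum_congr rfl fun v _ => h2 v
      _ = ∑ v, (∑ u, (G.dist v u : ℝ)) * x v - ∑ v, ∑ u, (G.dist v u : ℝ) * x u :=
          Finset.sum_sub_distrib _ _
      _ = 0 := by
          rw [Finset.sum_comm (f := fun v u => (G.dist v u : ℝ) * x u)]
          simp_rw [← Finset.sum_mul]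
          rw [sub_eq_zero]
          apply Finset.sum_congr rfl
          intro v _
          congr 1
          exact Finset.sum_congr rfl fun u _ => by rw [SimpleGraph.dist_comm]
  exact (mul_eq_zero.mp h1).resolve_left hlam

lemma exists_supported_eigvec (M : Matrix (Fin n) (Fin n) ℝ) (lam : ℝ) (hn : 5 ≤ n)
    (hrank : Module.finrank ℝ (Module.End.eigenspace M.mulVecLin lam) = n - 3)
    (c : Fin 4 → Fin n) (hc : Function.Injective c) :
    ∃ x : Fin n → ℝ, x ≠ 0 ∧ M *ᵥ x = lam • x ∧ ∀ u, (∀ i, u ≠ c i) → x u = 0 := by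
  classical
  set E := Module.End.eigenspace M.mulVecLin lam with hE
  set W : Submodule ℝ (Fin n → ℝ) :=
    Submodule.span ℝ (Set.range fun i : Fin 4 => Pi.single (M := fun _ : Fin n => ℝ) (c i) (1 : ℝ)) with hW
  have hind : LinearIndependent ℝ (fun i : Fin 4 => Pi.single (M := fun _ : Fin n => ℝ) (c i) (1 : ℝ)) := by
    have hb : LinearIndependent ℝ (fun j : Fin n => Pi.single (M := fun _ : Fin n => ℝ) j (1 : ℝ)) := by
      have := (Pi.basisFun ℝ (Fin n)).linearIndependent
      have he : ⇑(Pi.basisFun ℝ (Fin n)) = fun j : Fin n => Pi.single (M := fun _ : Fin n => ℝ) j (1 : ℝ) := by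
        funext j; exact Pi.basisFun_apply ℝ (Fin n) j
      rwa [he] at this
    exact hb.comp c hc
  have hW4 : Module.finrank ℝ W = 4 := by
    rw [hW, finrank_span_eq_card hind]
    simp
  have hsup : Module.finrank ℝ ↥(E ⊔ W) ≤ n := by
    have h1 := Submodule.finrank_le (E ⊔ W)
    rwa [Module.finrank_fin_fun] at h1
  have heq := Submodule.finrank_sup_add_finrank_inf_eq E W
  have hpos : 0 < Module.finrank ℝ ↥(E ⊓ W) := by
    rw [hrank, hW4] at heq
    omega
  obtain ⟨x, hxmem, hx0⟩ := Submodule.exists_mem_ne_zero_of_ne_bot (p := E ⊓ W) (by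
    intro hbot
    rw [hbot, finrank_bot] at hpos
    omega)
  refine ⟨x, hx0, ?_, ?_⟩
  · have hxE : M.mulVecLin x = lam • x := Module.End.mem_eigenspace_iff.mp hxmem.1
    simpa [Matrix.mulVecLin_apply] using hxE
  · intro u hu
    have hxW : x ∈ Submodule.span ℝ
        (Set.range fun i : Fin 4 => Pi.single (M := fun _ : Fin n => ℝ) (c i) (1 : ℝ)) := hxmem.2
    rw [Submodule.mem_span_range_iff_exists_fun] at hxW
    obtain ⟨t, ht⟩ := hxW
    have := congrFun ht u
    simp only [Finset.sum_apply, Pi.smul_apply, smul_eq_mul] at this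
    rw [← this]
    apply Finset.sum_eq_zero
    intro i _
    rw [Pi.single_apply, if_neg (hu i)]
    ring

lemma sum_four {x : Fin n → ℝ} {c1 c2 c3 c4 : Fin n}
    (h12 : c1 ≠ c2) (h13 : c1 ≠ c3) (h14 : c1 ≠ c4)
    (h23 : c2 ≠ c3) (h24 : c2 ≠ c4) (h34 : c3 ≠ c4)
    (hsupp : ∀ u, u ≠ c1 → u ≠ c2 → u ≠ c3 → u ≠ c4 → x u = 0) (g : Fin n → ℝ) :
    ∑ u, g u * x u = g c1 * x c1 + g c2 * x c2 + g c3 * x c3 + g c4 * x c4 := by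
  classical
  have hsub : ({c1, c2, c3, c4} : Finset (Fin n)) ⊆ Finset.univ := Finset.subset_univ _
  rw [← Finset.sum_subset hsub (fun u _ hu => by
    simp only [Finset.mem_insert, Finset.mem_singleton, not_or] at hu
    rw [hsupp u hu.1 hu.2.1 hu.2.2.1 hu.2.2.2]
    ring)]
  rw [Finset.sum_insert (by simp [h12, h13, h14]),
      Finset.sum_insert (by simp [h23, h24]),
      Finset.sum_insert (by simp [h34]),
      Finset.sum_singleton]
  ring

lemma sum_two_vec {c1 c2 : Fin n} (h : c1 ≠ c2) (α β : ℝ) (g : Fin n → ℝ) :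
    ∑ u, g u * (if u = c1 then α else if u = c2 then β else 0)
      = g c1 * α + g c2 * β := by
  classical
  have hsub : ({c1, c2} : Finset (Fin n)) ⊆ Finset.univ := Finset.subset_univ _
  rw [← Finset.sum_subset hsub (fun u _ hu => by
    simp only [Finset.mem_insert, Finset.mem_singleton, not_or] at hu
    rw [if_neg hu.1, if_neg hu.2]
    ring)]
  rw [Finset.sum_pair h]
  simp [h, h.symm]

lemma pair_bound {u v d : ℝ} (hd : 1 ≤ d)
    (h : ∀ α β : ℝ, u * α ^ 2 + v * β ^ 2 ≤ 2 * d * (α * β)) :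
    u < 0 ∧ v < 0 ∧ d ^ 2 ≤ u * v := by
  have hd0 : (0 : ℝ) < d := by linarith
  have hu0 : u ≤ 0 := by have := h 1 0; nlinarith [this]
  have hv0 : v ≤ 0 := by have := h 0 1; nlinarith [this]
  have hu : u < 0 := by
    rcases lt_or_eq_of_le hu0 with h' | h'
    · exact h'
    · exfalso
      have h2 := h ((v - 1) / (2 * d)) 1
      rw [h'] at h2
      have h3 : 2 * d * ((v - 1) / (2 * d) * 1) = v - 1 := by field_simp
      nlinarith [h2]
  have hv : v < 0 := by
    rcases lt_or_eq_of_le hv0 with h' | h'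
    · exact h'
    · exfalso
      have h2 := h 1 ((u - 1) / (2 * d))
      rw [h'] at h2
      have h3 : 2 * d * (1 * ((u - 1) / (2 * d))) = u - 1 := by field_simp
      nlinarith [h2]
  refine ⟨hu, hv, ?_⟩
  have h2 := h d u
  nlinarith [h2, hu]

lemma exists_supported_eigvec' (M : Matrix (Fin n) (Fin n) ℝ) (lam : ℝ) (hn : 5 ≤ n)
    (hrank : Module.finrank ℝ (Module.End.eigenspace M.mulVecLin lam) = n - 3)
    (c1 c2 c3 c4 : Fin n) (h12 : c1 ≠ c2) (h13 : c1 ≠ c3) (h14 : c1 ≠ c4)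
    (h23 : c2 ≠ c3) (h24 : c2 ≠ c4) (h34 : c3 ≠ c4) :
    ∃ x : Fin n → ℝ, x ≠ 0 ∧ M *ᵥ x = lam • x ∧
      ∀ u, u ≠ c1 → u ≠ c2 → u ≠ c3 → u ≠ c4 → x u = 0 := by
  set c : Fin 4 → Fin n := ![c1, c2, c3, c4] with hc
  have hcinj : Function.Injective c := by
    intro i j hij
    fin_cases i <;> fin_cases j <;> simp_all [hc] <;> first
      | rfl
      | (exfalso; first
          | exact h12 hij | exact h13 hij | exact h14 hij
          | exact h23 hij | exact h24 hij | exact h34 hij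
          | exact h12 hij.symm | exact h13 hij.symm | exact h14 hij.symm
          | exact h23 hij.symm | exact h24 hij.symm | exact h34 hij.symm)
  obtain ⟨x, hx0, hxe, hxs⟩ := exists_supported_eigvec M lam hn hrank c hcinj
  refine ⟨x, hx0, hxe, fun u hu1 hu2 hu3 hu4 => hxs u ?_⟩
  intro i
  fin_cases i <;> simpa [hc] using ‹_›



lemma pair_quad (G : SimpleGraph (Fin n)) (hn0 : 0 < n) {a b : Fin n} (hab : a ≠ b)
    (α β : ℝ) :
    ((∑ u, (G.dist a u : ℝ)) - lambdaMax (distLaplacian G)) * α ^ 2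
      + ((∑ u, (G.dist b u : ℝ)) - lambdaMax (distLaplacian G)) * β ^ 2
      ≤ 2 * (G.dist a b : ℝ) * (α * β) := by
  classical
  set z : Fin n → ℝ := fun u => if u = a then α else if u = b then β else 0 with hz
  have hza : z a = α := by rw [hz]; simp
  have hzb : z b = β := by rw [hz]; simp [hab.symm]
  have hsum : ∀ g : Fin n → ℝ, ∑ u, g u * z u = g a * α + g b * β := by
    intro g
    rw [← sum_two_vec hab α β g]
  have hzz : z ⬝ᵥ z = α ^ 2 + β ^ 2 := by
    calc z ⬝ᵥ z = ∑ u, z u * z u := rfl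
      _ = z a * α + z b * β := hsum z
      _ = α ^ 2 + β ^ 2 := by rw [hza, hzb]; ring
  have hMz : ∀ v : Fin n, (distLaplacian G *ᵥ z) v
      = (∑ u, (G.dist v u : ℝ)) * z v - ((G.dist v a : ℝ) * α + (G.dist v b : ℝ) * β) := by
    intro v
    rw [mulVec_distLap, hsum (fun u => (G.dist v u : ℝ))]
  have hdot : z ⬝ᵥ (distLaplacian G *ᵥ z)
      = ((∑ u, (G.dist a u : ℝ)) * α - (G.dist a b : ℝ) * β) * α
        + ((∑ u, (G.dist b u : ℝ)) * β - (G.dist a b : ℝ) * α) * β := by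
    calc z ⬝ᵥ (distLaplacian G *ᵥ z) = (distLaplacian G *ᵥ z) ⬝ᵥ z := dotProduct_comm _ _
      _ = ∑ u, (distLaplacian G *ᵥ z) u * z u := rfl
      _ = (distLaplacian G *ᵥ z) a * α + (distLaplacian G *ᵥ z) b * β := hsum _
      _ = _ := by
          rw [hMz a, hMz b, hza, hzb, SimpleGraph.dist_self, SimpleGraph.dist_self,
            SimpleGraph.dist_comm (u := b) (v := a)]
          push_cast
          ring
  have hray := rayleigh_le (distLaplacian G) (distLap_isHermitian G) hn0 z
  rw [hdot, hzz] at hray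
  nlinarith [hray]

end NoP5Aux
open NoP5Aux in
set_option maxHeartbeats 1000000 in
/-- If `G` is a connected graph on `n ≥ 5` vertices whose largest distance
Laplacian eigenvalue has multiplicity `n - 3`, then `G` contains no induced `P₅`. -/
theorem no_induced_P5_of_multiplicity_eq_sub_three
    (n : ℕ) (hn : 5 ≤ n) (G : SimpleGraph (Fin n)) (hG : G.Connected)
    (hmult : eigMult (distLaplacian G) (lambdaMax (distLaplacian G)) = n - 3) :
    IsEmpty (SimpleGraph.pathGraph 5 ↪g G) := by
  constructor
  intro f
  have hn0 : 0 < n := by omega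
  set lam := lambdaMax (distLaplacian G) with hlamdef
  set v1 : Fin n := f 0 with hv1
  set v2 : Fin n := f 1 with hv2
  set v3 : Fin n := f 2 with hv3
  set v4 : Fin n := f 3 with hv4
  set v5 : Fin n := f 4 with hv5
  have hfinj : Function.Injective f := f.injective
  have e12 : v1 ≠ v2 := fun h => by have := hfinj h; simp_all
  have e13 : v1 ≠ v3 := fun h => by have := hfinj h; simp_all
  have e14 : v1 ≠ v4 := fun h => by have := hfinj h; simp_all
  have e15 : v1 ≠ v5 := fun h => by have := hfinj h; simp_all
  have e23 : v2 ≠ v3 := fun h => by have := hfinj h; simp_all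
  have e24 : v2 ≠ v4 := fun h => by have := hfinj h; simp_all
  have e25 : v2 ≠ v5 := fun h => by have := hfinj h; simp_all
  have e34 : v3 ≠ v4 := fun h => by have := hfinj h; simp_all
  have e35 : v3 ≠ v5 := fun h => by have := hfinj h; simp_all
  have e45 : v4 ≠ v5 := fun h => by have := hfinj h; simp_all
  have hadj : ∀ i j : Fin 5, (SimpleGraph.pathGraph 5).Adj i j → G.dist (f i) (f j) = 1 :=
    fun i j h => SimpleGraph.dist_eq_one_iff_adj.mpr (f.map_adj_iff.mpr h)
  have hnadj : ∀ i j : Fin 5, ¬ (SimpleGraph.pathGraph 5).Adj i j → i ≠ j →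
      2 ≤ G.dist (f i) (f j) := by
    intro i j h hne
    have h1 : G.dist (f i) (f j) ≠ 1 := by
      intro hd
      exact h (f.map_adj_iff.mp (SimpleGraph.dist_eq_one_iff_adj.mp hd))
    have h0 : 0 < G.dist (f i) (f j) :=
      hG.pos_dist_of_ne (fun hh => hne (hfinj hh))
    omega
  have hd12 : G.dist v1 v2 = 1 := hadj 0 1 (by rw [SimpleGraph.pathGraph_adj]; decide)
  have hd23 : G.dist v2 v3 = 1 := hadj 1 2 (by rw [SimpleGraph.pathGraph_adj]; decide)
  have hd34 : G.dist v3 v4 = 1 := hadj 2 3 (by rw [SimpleGraph.pathGraph_adj]; decide)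
  have hd45 : G.dist v4 v5 = 1 := hadj 3 4 (by rw [SimpleGraph.pathGraph_adj]; decide)
  have hd13 : G.dist v1 v3 = 2 := by
    have hlb := hnadj 0 2 (by rw [SimpleGraph.pathGraph_adj]; decide) (by decide)
    rw [← hv1, ← hv3] at hlb
    have hub := hG.dist_triangle (u := v1) (v := v2) (w := v3)
    omega
  have hd24 : G.dist v2 v4 = 2 := by
    have hlb := hnadj 1 3 (by rw [SimpleGraph.pathGraph_adj]; decide) (by decide)
    rw [← hv2, ← hv4] at hlb
    have hub := hG.dist_triangle (u := v2) (v := v3) (w := v4)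
    omega
  have hd35 : G.dist v3 v5 = 2 := by
    have hlb := hnadj 2 4 (by rw [SimpleGraph.pathGraph_adj]; decide) (by decide)
    rw [← hv3, ← hv5] at hlb
    have hub := hG.dist_triangle (u := v3) (v := v4) (w := v5)
    omega
  have hp : G.dist v1 v4 = 2 ∨ G.dist v1 v4 = 3 := by
    have hlb := hnadj 0 3 (by rw [SimpleGraph.pathGraph_adj]; decide) (by decide)
    rw [← hv1, ← hv4] at hlb
    have hub := hG.dist_triangle (u := v1) (v := v3) (w := v4)
    omega
  have hq : G.dist v2 v5 = 2 ∨ G.dist v2 v5 = 3 := by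
    have hlb := hnadj 1 4 (by rw [SimpleGraph.pathGraph_adj]; decide) (by decide)
    rw [← hv2, ← hv5] at hlb
    have hub := hG.dist_triangle (u := v2) (v := v4) (w := v5)
    omega
  have hr : G.dist v1 v5 = 2 ∨ G.dist v1 v5 = 3 ∨ G.dist v1 v5 = 4 := by
    have hlb := hnadj 0 4 (by rw [SimpleGraph.pathGraph_adj]; decide) (by decide)
    rw [← hv1, ← hv5] at hlb
    have hub := hG.dist_triangle (u := v1) (v := v4) (w := v5)
    rcases hp with h | h <;> omega
  -- real distance abbreviations
  set P : ℝ := (G.dist v1 v4 : ℝ) with hPdef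
  set Q : ℝ := (G.dist v2 v5 : ℝ) with hQdef
  set R : ℝ := (G.dist v1 v5 : ℝ) with hRdef
  have hPr : P = 2 ∨ P = 3 := by
    rcases hp with h | h
    · left; rw [hPdef, h]; norm_num
    · right; rw [hPdef, h]; norm_num
  have hQr : Q = 2 ∨ Q = 3 := by
    rcases hq with h | h
    · left; rw [hQdef, h]; norm_num
    · right; rw [hQdef, h]; norm_num
  have hRr : R = 2 ∨ R = 3 ∨ R = 4 := by
    rcases hr with h | h | h
    · left; rw [hRdef, h]; norm_num
    · right; left; rw [hRdef, h]; norm_num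
    · right; right; rw [hRdef, h]; norm_num
  have hP1 : (1:ℝ) ≤ P := by rcases hPr with h | h <;> rw [h] <;> norm_num
  have hPm1 : (1:ℝ) ≤ P - 1 := by rcases hPr with h | h <;> rw [h] <;> norm_num
  have hQm1 : (1:ℝ) ≤ Q - 1 := by rcases hQr with h | h <;> rw [h] <;> norm_num
  -- transmissions
  set T1 : ℝ := ∑ u, (G.dist v1 u : ℝ) with hT1def
  set T2 : ℝ := ∑ u, (G.dist v2 u : ℝ) with hT2def
  set T4 : ℝ := ∑ u, (G.dist v4 u : ℝ) with hT4def
  set u1 : ℝ := T1 - lam with hu1def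
  set u2 : ℝ := T2 - lam with hu2def
  set u4 : ℝ := T4 - lam with hu4def
  -- Rayleigh pair bound on (v1, v4)
  have hpair : ∀ α β : ℝ, u1 * α ^ 2 + u4 * β ^ 2 ≤ 2 * P * (α * β) := by
    intro α β
    have h := pair_quad G hn0 e14 α β
    rw [← hT1def, ← hT4def, ← hlamdef, ← hPdef, ← hu1def, ← hu4def] at h
    exact h
  obtain ⟨hu1neg, hu4neg, hPB⟩ := pair_bound hP1 hpair
  -- lam is positive hence nonzero
  have hT1ge : (1:ℝ) ≤ T1 := by
    have h1 : ((G.dist v1 v2 : ℕ) : ℝ) ≤ ∑ u, (G.dist v1 u : ℝ) :=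
      Finset.single_le_sum (f := fun u => (G.dist v1 u : ℝ)) (fun u _ => by positivity)
        (Finset.mem_univ v2)
    rw [hd12, ← hT1def] at h1
    exact_mod_cast h1
  have hu1lt : T1 - lam < 0 := by rw [← hu1def]; exact hu1neg
  have hlampos : 0 < lam := by linarith
  have hlam0 : lam ≠ 0 := ne_of_gt hlampos
  -- eigenvector x supported on {v1, v2, v4, v5}
  obtain ⟨x, hx0, hxeig, hxsupp⟩ := exists_supported_eigvec' (distLaplacian G) lam hn hmult
    v1 v2 v4 v5 e12 e14 e15 e24 e25 e45
  have hrowx : ∀ v : Fin n, lam * x v = (∑ u, (G.dist v u : ℝ)) * x v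
      - ((G.dist v v1 : ℝ) * x v1 + (G.dist v v2 : ℝ) * x v2
        + (G.dist v v4 : ℝ) * x v4 + (G.dist v v5 : ℝ) * x v5) := by
    intro v
    have h1 := congrFun hxeig v
    rw [mulVec_distLap] at h1
    rw [sum_four e12 e14 e15 e24 e25 e45 hxsupp (fun u => (G.dist v u : ℝ))] at h1
    simpa using h1.symm
  have hsum0raw := sum_eq_zero_of_eig G x lam hxeig hlam0
  have hsum1 := sum_four e12 e14 e15 e24 e25 e45 hxsupp (fun _ => (1:ℝ))
  simp only [one_mul] at hsum1
  set s : ℝ := x v1 with hsdef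
  set w : ℝ := x v2 with hwdef
  set y4 : ℝ := x v4 with hy4def
  set y5 : ℝ := x v5 with hy5def
  have hx3 : x v3 = 0 := hxsupp v3 (Ne.symm e13) (Ne.symm e23) e34 e35
  have hsum0 : s + w + y4 + y5 = 0 := by rw [hsum0raw] at hsum1; linarith [hsum1]
  -- row at v3
  have hrow3 := hrowx v3
  have hc31 : G.dist v3 v1 = 2 := by rw [SimpleGraph.dist_comm]; exact hd13
  have hc32 : G.dist v3 v2 = 1 := by rw [SimpleGraph.dist_comm]; exact hd23
  rw [hc31, hc32, hd34, hd35, hx3] at hrow3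
  push_cast at hrow3
  have hL3 : 2*s + w + y4 + 2*y5 = 0 := by linarith [hrow3]
  have hy5v : y5 = -s := by linarith
  have hy4v : y4 = -w := by linarith
  -- row at v1
  have hrow1 := hrowx v1
  rw [SimpleGraph.dist_self, hd12, ← hsdef, hy4v, hy5v, ← hT1def] at hrow1
  push_cast at hrow1
  have hX1 : u1 * s + (R*s + (P-1)*w) = 0 := by
    rw [hu1def]
    linear_combination - hrow1
  -- row at v2
  have hrow2 := hrowx v2
  have hc21 : G.dist v2 v1 = 1 := by rw [SimpleGraph.dist_comm]; exact hd12
  rw [SimpleGraph.dist_self, hc21, hd24, ← hwdef, hy4v, hy5v, ← hT2def] at hrow2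
  push_cast at hrow2
  have hX2 : u2 * w + (2*w + (Q-1)*s) = 0 := by
    rw [hu2def]
    linear_combination - hrow2
  -- row at v4
  have hrow4 := hrowx v4
  have hc41 : G.dist v4 v1 = G.dist v1 v4 := SimpleGraph.dist_comm
  have hc42 : G.dist v4 v2 = 2 := by rw [SimpleGraph.dist_comm]; exact hd24
  rw [SimpleGraph.dist_self, hc41, hc42, hd45, ← hy4def, hy4v, hy5v, ← hT4def] at hrow4
  push_cast at hrow4
  have hX4 : u4 * w + (2*w + (P-1)*s) = 0 := by
    rw [hu4def]
    linear_combination hrow4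
  -- s and w are nonzero
  have hsne : s ≠ 0 := by
    intro hs0
    have hw0 : w = 0 := by
      rw [hs0] at hX1
      have : (P-1)*w = 0 := by linarith [hX1]
      rcases mul_eq_zero.mp this with h | h
      · linarith
      · exact h
    apply hx0
    funext u
    simp only [Pi.zero_apply]
    by_cases h1 : u = v1
    · rw [h1, ← hsdef, hs0]
    by_cases h2 : u = v2
    · rw [h2, ← hwdef, hw0]
    by_cases h4 : u = v4
    · rw [h4, ← hy4def, hy4v, hw0, neg_zero]
    by_cases h5 : u = v5
    · rw [h5, ← hy5def, hy5v, hs0, neg_zero]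
    · exact hxsupp u h1 h2 h4 h5
  have hwne : w ≠ 0 := by
    intro hw0
    rw [hw0] at hX2
    have h1 : (Q-1)*s = 0 := by linarith [hX2]
    rcases mul_eq_zero.mp h1 with h | h
    · linarith
    · exact hsne h
  -- eigenvector a supported on {v1, v2, v3, v4}
  obtain ⟨a, ha0, haeig, hasupp⟩ := exists_supported_eigvec' (distLaplacian G) lam hn hmult
    v1 v2 v3 v4 e12 e13 e14 e23 e24 e34
  have hrowa : ∀ v : Fin n, lam * a v = (∑ u, (G.dist v u : ℝ)) * a v
      - ((G.dist v v1 : ℝ) * a v1 + (G.dist v v2 : ℝ) * a v2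
        + (G.dist v v3 : ℝ) * a v3 + (G.dist v v4 : ℝ) * a v4) := by
    intro v
    have h1 := congrFun haeig v
    rw [mulVec_distLap] at h1
    rw [sum_four e12 e13 e14 e23 e24 e34 hasupp (fun u => (G.dist v u : ℝ))] at h1
    simpa using h1.symm
  have hasum0raw := sum_eq_zero_of_eig G a lam haeig hlam0
  have hasum1 := sum_four e12 e13 e14 e23 e24 e34 hasupp (fun _ => (1:ℝ))
  simp only [one_mul] at hasum1
  set a1 : ℝ := a v1 with ha1def
  set a2 : ℝ := a v2 with ha2def
  set a3 : ℝ := a v3 with ha3def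
  set a4 : ℝ := a v4 with ha4def
  have ha5 : a v5 = 0 := hasupp v5 (Ne.symm e15) (Ne.symm e25) (Ne.symm e35) (Ne.symm e45)
  have hS : a1 + a2 + a3 + a4 = 0 := by rw [hasum0raw] at hasum1; linarith [hasum1]
  -- row at v5
  have hrowa5 := hrowa v5
  have hc51 : G.dist v5 v1 = G.dist v1 v5 := SimpleGraph.dist_comm
  have hc52 : G.dist v5 v2 = G.dist v2 v5 := SimpleGraph.dist_comm
  have hc53 : G.dist v5 v3 = 2 := by rw [SimpleGraph.dist_comm]; exact hd35
  have hc54 : G.dist v5 v4 = 1 := by rw [SimpleGraph.dist_comm]; exact hd45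
  rw [hc51, hc52, hc53, hc54, ha5] at hrowa5
  push_cast at hrowa5
  have hF5 : R*a1 + Q*a2 + 2*a3 + a4 = 0 := by linarith [hrowa5]
  -- row at v1
  have hrowa1 := hrowa v1
  rw [SimpleGraph.dist_self, hd12, hd13, ← ha1def, ← hT1def] at hrowa1
  push_cast at hrowa1
  have hG1 : u1 * a1 - (a2 + 2*a3 + P*a4) = 0 := by
    rw [hu1def]
    linear_combination - hrowa1
  -- row at v2
  have hrowa2 := hrowa v2
  rw [SimpleGraph.dist_self, hc21, hd23, hd24, ← ha2def, ← hT2def] at hrowa2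
  push_cast at hrowa2
  have hG2 : u2 * a2 - (a1 + a3 + 2*a4) = 0 := by
    rw [hu2def]
    linear_combination - hrowa2
  -- row at v3
  have hrowa3 := hrowa v3
  rw [SimpleGraph.dist_self, hc31, hc32, hd34] at hrowa3
  push_cast at hrowa3
  -- a3 is nonzero
  have ha3 : a3 ≠ 0 := by
    intro h30
    rw [← ha3def] at hrowa3
    rw [h30] at hrowa3 hS hF5
    have hA1 : a1 = 0 := by linarith [hrowa3, hS]
    rw [hA1] at hS hF5
    have hA2 : a2 = 0 := by
      have h1 : (Q-1)*a2 = 0 := by linarith [hS, hF5]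
      rcases mul_eq_zero.mp h1 with h | h
      · linarith
      · exact h
    have hA4 : a4 = 0 := by linarith [hS, hA2]
    apply ha0
    funext u
    simp only [Pi.zero_apply]
    by_cases h1 : u = v1
    · rw [h1, ← ha1def, hA1]
    by_cases h2 : u = v2
    · rw [h2, ← ha2def, hA2]
    by_cases h3 : u = v3
    · rw [h3, ← ha3def, h30]
    by_cases h4 : u = v4
    · rw [h4, ← ha4def, hA4]
    · exact hasupp u h1 h2 h3 h4
  clear hrowa3 hrow1 hrow2 hrow3 hrow4 hrowa1 hrowa2 hrowa5
  clear hrowx hrowa hsum1 hasum1 hsum0raw hasum0raw hxeig haeig hxsupp hasupp hx0 ha0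
  clear hpair hmult hadj hnadj hx3 ha5 hsum0 hL3
  clear_value lam v1 v2 v3 v4 v5 P Q R T1 T2 T4 u1 u2 u4 s w y4 y5 a1 a2 a3 a4
  rcases hPr with hPv | hPv
  · rcases hQr with hQv | hQv
    · rcases hRr with hRv | hRv | hRv
      · -- case (2,2,2)
        rw [hPv, hRv] at hX1
        rw [hQv] at hX2
        rw [hPv] at hX4
        rw [hRv, hQv] at hF5
        rw [hPv] at hG1
        rw [hPv] at hPB
        have hQa : ((0:ℝ)*s^2 + 1*s*w + 1*w^2) * a3 = 0 := by
          linear_combination ((-1)*w*a1 + (-1)*s*a1) * hX1 + ((-1)*w*a2 + (-1)*s*a2) * hX2 + (s*w + s*s) * hG1 + (w*w + s*w) * hG2 + (2*w*w + 4*s*w + 2*s*s) * hS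
        have hQ0 : ((0:ℝ)*s^2 + 1*s*w + 1*w^2) = 0 :=
          (mul_eq_zero.mp hQa).resolve_right ha3
        have hs2 : (0:ℝ) < s^2 := by positivity
        have hw2 : (0:ℝ) < w^2 := by positivity
        have hsw : s*w < 0 := by linarith [hQ0, hs2, hw2]
        have hABle : u1*u4*(s*w) ≤ (2:ℝ)^2*(s*w) := by
          have := mul_le_mul_of_nonpos_right hPB (le_of_lt hsw)
          linarith [this]
        have hprod : u1*u4*(s*w) = ((2:ℝ)*s + (2-1)*w)*(2*w + (2-1)*s) := by
          linear_combination (u4*w)*hX1 - ((2:ℝ)*s + (2-1)*w)*hX4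
        have hfin : ((2:ℝ)*s + (2-1)*w)*(2*w + (2-1)*s) - (2:ℝ)^2*(s*w) = 2*(s + (1/4)*w)^2 + (15/8)*w^2 := by
          linear_combination (0)*hQ0
        linarith [hfin, hprod, hABle, sq_nonneg (s + (1/4)*w), hw2]
      · -- case (2,2,3)
        rw [hPv, hRv] at hX1
        rw [hQv] at hX2
        rw [hPv] at hX4
        rw [hRv, hQv] at hF5
        rw [hPv] at hG1
        rw [hPv] at hPB
        have hQa : ((2:ℝ)*s^2 + 6*s*w + 2*w^2) * a3 = 0 := by
          linear_combination ((-2)*w*a1 + (-4)*s*a1) * hX1 + ((-2)*w*a2 + (-6)*s*a2) * hX2 + (2*s*w + 4*s*s) * hG1 + (2*w*w + 6*s*w) * hG2 + (4*w*w + 16*s*w + 6*s*s) * hS + (2*s*s) * hF5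
        have hQ0 : ((2:ℝ)*s^2 + 6*s*w + 2*w^2) = 0 :=
          (mul_eq_zero.mp hQa).resolve_right ha3
        have hs2 : (0:ℝ) < s^2 := by positivity
        have hw2 : (0:ℝ) < w^2 := by positivity
        have hsw : s*w < 0 := by linarith [hQ0, hs2, hw2]
        have hABle : u1*u4*(s*w) ≤ (2:ℝ)^2*(s*w) := by
          have := mul_le_mul_of_nonpos_right hPB (le_of_lt hsw)
          linarith [this]
        have hprod : u1*u4*(s*w) = ((3:ℝ)*s + (2-1)*w)*(2*w + (2-1)*s) := by
          linear_combination (u4*w)*hX1 - ((3:ℝ)*s + (2-1)*w)*hX4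
        have hfin : ((3:ℝ)*s + (2-1)*w)*(2*w + (2-1)*s) - (2:ℝ)^2*(s*w) = 3*(s + (1/2)*w)^2 + (5/4)*w^2 := by
          linear_combination (0)*hQ0
        linarith [hfin, hprod, hABle, sq_nonneg (s + (1/2)*w), hw2]
      · -- case (2,2,4)
        rw [hPv, hRv] at hX1
        rw [hQv] at hX2
        rw [hPv] at hX4
        rw [hRv, hQv] at hF5
        rw [hPv] at hG1
        rw [hPv] at hPB
        have hQa : ((6:ℝ)*s^2 + 15*s*w + 3*w^2) * a3 = 0 := by
          linear_combination ((-3)*w*a1 + (-9)*s*a1) * hX1 + ((-3)*w*a2 + (-15)*s*a2) * hX2 + (3*s*w + 9*s*s) * hG1 + (3*w*w + 15*s*w) * hG2 + (6*w*w + 36*s*w + 12*s*s) * hS + (6*s*s) * hF5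
        have hQ0 : ((6:ℝ)*s^2 + 15*s*w + 3*w^2) = 0 :=
          (mul_eq_zero.mp hQa).resolve_right ha3
        have hs2 : (0:ℝ) < s^2 := by positivity
        have hw2 : (0:ℝ) < w^2 := by positivity
        have hsw : s*w < 0 := by linarith [hQ0, hs2, hw2]
        have hABle : u1*u4*(s*w) ≤ (2:ℝ)^2*(s*w) := by
          have := mul_le_mul_of_nonpos_right hPB (le_of_lt hsw)
          linarith [this]
        have hprod : u1*u4*(s*w) = ((4:ℝ)*s + (2-1)*w)*(2*w + (2-1)*s) := by
          linear_combination (u4*w)*hX1 - ((4:ℝ)*s + (2-1)*w)*hX4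
        have hfin : ((4:ℝ)*s + (2-1)*w)*(2*w + (2-1)*s) - (2:ℝ)^2*(s*w) = 4*(s + (5/8)*w)^2 + (7/16)*w^2 := by
          linear_combination (0)*hQ0
        linarith [hfin, hprod, hABle, sq_nonneg (s + (5/8)*w), hw2]
    · rcases hRr with hRv | hRv | hRv
      · -- case (2,3,2)
        rw [hPv, hRv] at hX1
        rw [hQv] at hX2
        rw [hPv] at hX4
        rw [hRv, hQv] at hF5
        rw [hPv] at hG1
        rw [hPv] at hPB
        have hQa : ((0:ℝ)*s^2 + 2*s*w + 2*w^2) * a3 = 0 := by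
          linear_combination ((-2)*w*a1 + (-2)*s*a1) * hX1 + ((-2)*w*a2 + (-1)*s*a2) * hX2 + (2*s*w + 2*s*s) * hG1 + (2*w*w + s*w) * hG2 + (4*w*w + 5*s*w + 4*s*s) * hS + (s*w) * hF5
        have hQ0 : ((0:ℝ)*s^2 + 2*s*w + 2*w^2) = 0 :=
          (mul_eq_zero.mp hQa).resolve_right ha3
        have hs2 : (0:ℝ) < s^2 := by positivity
        have hw2 : (0:ℝ) < w^2 := by positivity
        have hsw : s*w < 0 := by linarith [hQ0, hs2, hw2]
        have hABle : u1*u4*(s*w) ≤ (2:ℝ)^2*(s*w) := by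
          have := mul_le_mul_of_nonpos_right hPB (le_of_lt hsw)
          linarith [this]
        have hprod : u1*u4*(s*w) = ((2:ℝ)*s + (2-1)*w)*(2*w + (2-1)*s) := by
          linear_combination (u4*w)*hX1 - ((2:ℝ)*s + (2-1)*w)*hX4
        have hfin : ((2:ℝ)*s + (2-1)*w)*(2*w + (2-1)*s) - (2:ℝ)^2*(s*w) = 2*(s + (1/4)*w)^2 + (15/8)*w^2 := by
          linear_combination (0)*hQ0
        linarith [hfin, hprod, hABle, sq_nonneg (s + (1/4)*w), hw2]
      · -- case (2,3,3)
        rw [hPv, hRv] at hX1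
        rw [hQv] at hX2
        rw [hPv] at hX4
        rw [hRv, hQv] at hF5
        rw [hPv] at hG1
        rw [hPv] at hPB
        have hQa : ((4:ℝ)*s^2 + 10*s*w + 4*w^2) * a3 = 0 := by
          linear_combination ((-4)*w*a1 + (-8)*s*a1) * hX1 + ((-4)*w*a2 + (-8)*s*a2) * hX2 + (4*s*w + 8*s*s) * hG1 + (4*w*w + 8*s*w) * hG2 + (8*w*w + 22*s*w + 12*s*s) * hS + (2*s*w + 4*s*s) * hF5
        have hQ0 : ((4:ℝ)*s^2 + 10*s*w + 4*w^2) = 0 :=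
          (mul_eq_zero.mp hQa).resolve_right ha3
        have hs2 : (0:ℝ) < s^2 := by positivity
        have hw2 : (0:ℝ) < w^2 := by positivity
        have hsw : s*w < 0 := by linarith [hQ0, hs2, hw2]
        have hABle : u1*u4*(s*w) ≤ (2:ℝ)^2*(s*w) := by
          have := mul_le_mul_of_nonpos_right hPB (le_of_lt hsw)
          linarith [this]
        have hprod : u1*u4*(s*w) = ((3:ℝ)*s + (2-1)*w)*(2*w + (2-1)*s) := by
          linear_combination (u4*w)*hX1 - ((3:ℝ)*s + (2-1)*w)*hX4
        have hfin : ((3:ℝ)*s + (2-1)*w)*(2*w + (2-1)*s) - (2:ℝ)^2*(s*w) = 3*(s + (1/2)*w)^2 + (5/4)*w^2 := by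
          linear_combination (0)*hQ0
        linarith [hfin, hprod, hABle, sq_nonneg (s + (1/2)*w), hw2]
      · -- case (2,3,4)
        rw [hPv, hRv] at hX1
        rw [hQv] at hX2
        rw [hPv] at hX4
        rw [hRv, hQv] at hF5
        rw [hPv] at hG1
        rw [hPv] at hPB
        have hQa : ((12:ℝ)*s^2 + 24*s*w + 6*w^2) * a3 = 0 := by
          linear_combination ((-6)*w*a1 + (-18)*s*a1) * hX1 + ((-6)*w*a2 + (-21)*s*a2) * hX2 + (6*s*w + 18*s*s) * hG1 + (6*w*w + 21*s*w) * hG2 + (12*w*w + 51*s*w + 24*s*s) * hS + (3*s*w + 12*s*s) * hF5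
        have hQ0 : ((12:ℝ)*s^2 + 24*s*w + 6*w^2) = 0 :=
          (mul_eq_zero.mp hQa).resolve_right ha3
        have hs2 : (0:ℝ) < s^2 := by positivity
        have hw2 : (0:ℝ) < w^2 := by positivity
        have hsw : s*w < 0 := by linarith [hQ0, hs2, hw2]
        have hABle : u1*u4*(s*w) ≤ (2:ℝ)^2*(s*w) := by
          have := mul_le_mul_of_nonpos_right hPB (le_of_lt hsw)
          linarith [this]
        have hprod : u1*u4*(s*w) = ((4:ℝ)*s + (2-1)*w)*(2*w + (2-1)*s) := by
          linear_combination (u4*w)*hX1 - ((4:ℝ)*s + (2-1)*w)*hX4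
        have hfin : ((4:ℝ)*s + (2-1)*w)*(2*w + (2-1)*s) - (2:ℝ)^2*(s*w) = 4*(s + (5/8)*w)^2 + (7/16)*w^2 := by
          linear_combination (0)*hQ0
        linarith [hfin, hprod, hABle, sq_nonneg (s + (5/8)*w), hw2]
  · rcases hQr with hQv | hQv
    · rcases hRr with hRv | hRv | hRv
      · -- case (3,2,2)
        rw [hPv, hRv] at hX1
        rw [hQv] at hX2
        rw [hPv] at hX4
        rw [hRv, hQv] at hF5
        rw [hPv] at hG1
        rw [hPv] at hPB
        have hQa : ((0:ℝ)*s^2 + 2*s*w + 2*w^2) * a3 = 0 := by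
          linear_combination ((-1)*w*a1 + (-1)*s*a1) * hX1 + ((-2)*w*a2 + (-1)*s*a2) * hX2 + (s*w + s*s) * hG1 + (2*w*w + s*w) * hG2 + (4*w*w + 5*s*w + 4*s*s) * hS + ((-1)*s*s) * hF5
        have hQ0 : ((0:ℝ)*s^2 + 2*s*w + 2*w^2) = 0 :=
          (mul_eq_zero.mp hQa).resolve_right ha3
        have hs2 : (0:ℝ) < s^2 := by positivity
        have hw2 : (0:ℝ) < w^2 := by positivity
        have hsw : s*w < 0 := by linarith [hQ0, hs2, hw2]
        have hABle : u1*u4*(s*w) ≤ (3:ℝ)^2*(s*w) := by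
          have := mul_le_mul_of_nonpos_right hPB (le_of_lt hsw)
          linarith [this]
        have hprod : u1*u4*(s*w) = ((2:ℝ)*s + (3-1)*w)*(2*w + (3-1)*s) := by
          linear_combination (u4*w)*hX1 - ((2:ℝ)*s + (3-1)*w)*hX4
        have hfin : ((2:ℝ)*s + (3-1)*w)*(2*w + (3-1)*s) - (3:ℝ)^2*(s*w) = 4*(s + (-1/8)*w)^2 + (63/16)*w^2 := by
          linear_combination (0)*hQ0
        linarith [hfin, hprod, hABle, sq_nonneg (s + (-1/8)*w), hw2]
      · -- case (3,2,3)
        rw [hPv, hRv] at hX1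
        rw [hQv] at hX2
        rw [hPv] at hX4
        rw [hRv, hQv] at hF5
        rw [hPv] at hG1
        rw [hPv] at hPB
        have hQa : ((4:ℝ)*s^2 + 10*s*w + 4*w^2) * a3 = 0 := by
          linear_combination ((-2)*w*a1 + (-4)*s*a1) * hX1 + ((-4)*w*a2 + (-8)*s*a2) * hX2 + (2*s*w + 4*s*s) * hG1 + (4*w*w + 8*s*w) * hG2 + (8*w*w + 22*s*w + 12*s*s) * hS
        have hQ0 : ((4:ℝ)*s^2 + 10*s*w + 4*w^2) = 0 :=
          (mul_eq_zero.mp hQa).resolve_right ha3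
        have hs2 : (0:ℝ) < s^2 := by positivity
        have hw2 : (0:ℝ) < w^2 := by positivity
        have hsw : s*w < 0 := by linarith [hQ0, hs2, hw2]
        have hABle : u1*u4*(s*w) ≤ (3:ℝ)^2*(s*w) := by
          have := mul_le_mul_of_nonpos_right hPB (le_of_lt hsw)
          linarith [this]
        have hprod : u1*u4*(s*w) = ((3:ℝ)*s + (3-1)*w)*(2*w + (3-1)*s) := by
          linear_combination (u4*w)*hX1 - ((3:ℝ)*s + (3-1)*w)*hX4
        have hfin : ((3:ℝ)*s + (3-1)*w)*(2*w + (3-1)*s) - (3:ℝ)^2*(s*w) = 6*(s + (1/12)*w)^2 + (95/24)*w^2 := by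
          linear_combination (0)*hQ0
        linarith [hfin, hprod, hABle, sq_nonneg (s + (1/12)*w), hw2]
      · -- case (3,2,4)
        rw [hPv, hRv] at hX1
        rw [hQv] at hX2
        rw [hPv] at hX4
        rw [hRv, hQv] at hF5
        rw [hPv] at hG1
        rw [hPv] at hPB
        have hQa : ((12:ℝ)*s^2 + 24*s*w + 6*w^2) * a3 = 0 := by
          linear_combination ((-3)*w*a1 + (-9)*s*a1) * hX1 + ((-6)*w*a2 + (-21)*s*a2) * hX2 + (3*s*w + 9*s*s) * hG1 + (6*w*w + 21*s*w) * hG2 + (12*w*w + 51*s*w + 24*s*s) * hS + (3*s*s) * hF5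
        have hQ0 : ((12:ℝ)*s^2 + 24*s*w + 6*w^2) = 0 :=
          (mul_eq_zero.mp hQa).resolve_right ha3
        have hs2 : (0:ℝ) < s^2 := by positivity
        have hw2 : (0:ℝ) < w^2 := by positivity
        have hsw : s*w < 0 := by linarith [hQ0, hs2, hw2]
        have hABle : u1*u4*(s*w) ≤ (3:ℝ)^2*(s*w) := by
          have := mul_le_mul_of_nonpos_right hPB (le_of_lt hsw)
          linarith [this]
        have hprod : u1*u4*(s*w) = ((4:ℝ)*s + (3-1)*w)*(2*w + (3-1)*s) := by
          linear_combination (u4*w)*hX1 - ((4:ℝ)*s + (3-1)*w)*hX4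
        have hfin : ((4:ℝ)*s + (3-1)*w)*(2*w + (3-1)*s) - (3:ℝ)^2*(s*w) = 8*(s + (3/16)*w)^2 + (119/32)*w^2 := by
          linear_combination (0)*hQ0
        linarith [hfin, hprod, hABle, sq_nonneg (s + (3/16)*w), hw2]
    · rcases hRr with hRv | hRv | hRv
      · -- case (3,3,2)
        rw [hPv, hRv] at hX1
        rw [hQv] at hX2
        rw [hPv] at hX4
        rw [hRv, hQv] at hF5
        rw [hPv] at hG1
        rw [hPv] at hPB
        have hQa : ((0:ℝ)*s^2 + 4*s*w + 4*w^2) * a3 = 0 := by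
          linear_combination ((-2)*w*a1 + (-2)*s*a1) * hX1 + ((-4)*w*a2) * hX2 + (2*s*w + 2*s*s) * hG1 + (4*w*w) * hG2 + (8*w*w + 4*s*w + 8*s*s) * hS + (2*s*w + (-2)*s*s) * hF5
        have hQ0 : ((0:ℝ)*s^2 + 4*s*w + 4*w^2) = 0 :=
          (mul_eq_zero.mp hQa).resolve_right ha3
        have hs2 : (0:ℝ) < s^2 := by positivity
        have hw2 : (0:ℝ) < w^2 := by positivity
        have hsw : s*w < 0 := by linarith [hQ0, hs2, hw2]
        have hABle : u1*u4*(s*w) ≤ (3:ℝ)^2*(s*w) := by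
          have := mul_le_mul_of_nonpos_right hPB (le_of_lt hsw)
          linarith [this]
        have hprod : u1*u4*(s*w) = ((2:ℝ)*s + (3-1)*w)*(2*w + (3-1)*s) := by
          linear_combination (u4*w)*hX1 - ((2:ℝ)*s + (3-1)*w)*hX4
        have hfin : ((2:ℝ)*s + (3-1)*w)*(2*w + (3-1)*s) - (3:ℝ)^2*(s*w) = 4*(s + (-1/8)*w)^2 + (63/16)*w^2 := by
          linear_combination (0)*hQ0
        linarith [hfin, hprod, hABle, sq_nonneg (s + (-1/8)*w), hw2]
      · -- case (3,3,3)
        rw [hPv, hRv] at hX1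
        rw [hQv] at hX2
        rw [hPv] at hX4
        rw [hRv, hQv] at hF5
        rw [hPv] at hG1
        rw [hPv] at hPB
        have hQa : ((8:ℝ)*s^2 + 16*s*w + 8*w^2) * a3 = 0 := by
          linear_combination ((-4)*w*a1 + (-8)*s*a1) * hX1 + ((-8)*w*a2 + (-8)*s*a2) * hX2 + (4*s*w + 8*s*s) * hG1 + (8*w*w + 8*s*w) * hG2 + (16*w*w + 24*s*w + 24*s*s) * hS + (4*s*w) * hF5
        have hQ0 : ((8:ℝ)*s^2 + 16*s*w + 8*w^2) = 0 :=
          (mul_eq_zero.mp hQa).resolve_right ha3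
        have hs2 : (0:ℝ) < s^2 := by positivity
        have hw2 : (0:ℝ) < w^2 := by positivity
        have hsw : s*w < 0 := by linarith [hQ0, hs2, hw2]
        have hABle : u1*u4*(s*w) ≤ (3:ℝ)^2*(s*w) := by
          have := mul_le_mul_of_nonpos_right hPB (le_of_lt hsw)
          linarith [this]
        have hprod : u1*u4*(s*w) = ((3:ℝ)*s + (3-1)*w)*(2*w + (3-1)*s) := by
          linear_combination (u4*w)*hX1 - ((3:ℝ)*s + (3-1)*w)*hX4
        have hfin : ((3:ℝ)*s + (3-1)*w)*(2*w + (3-1)*s) - (3:ℝ)^2*(s*w) = 6*(s + (1/12)*w)^2 + (95/24)*w^2 := by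
          linear_combination (0)*hQ0
        linarith [hfin, hprod, hABle, sq_nonneg (s + (1/12)*w), hw2]
      · -- case (3,3,4)
        rw [hPv, hRv] at hX1
        rw [hQv] at hX2
        rw [hPv] at hX4
        rw [hRv, hQv] at hF5
        rw [hPv] at hG1
        rw [hPv] at hPB
        have hQa : ((24:ℝ)*s^2 + 36*s*w + 12*w^2) * a3 = 0 := by
          linear_combination ((-6)*w*a1 + (-18)*s*a1) * hX1 + ((-12)*w*a2 + (-24)*s*a2) * hX2 + (6*s*w + 18*s*s) * hG1 + (12*w*w + 24*s*w) * hG2 + (24*w*w + 60*s*w + 48*s*s) * hS + (6*s*w + 6*s*s) * hF5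
        have hQ0 : ((24:ℝ)*s^2 + 36*s*w + 12*w^2) = 0 :=
          (mul_eq_zero.mp hQa).resolve_right ha3
        have hs2 : (0:ℝ) < s^2 := by positivity
        have hw2 : (0:ℝ) < w^2 := by positivity
        have hsw : s*w < 0 := by linarith [hQ0, hs2, hw2]
        have hABle : u1*u4*(s*w) ≤ (3:ℝ)^2*(s*w) := by
          have := mul_le_mul_of_nonpos_right hPB (le_of_lt hsw)
          linarith [this]
        have hprod : u1*u4*(s*w) = ((4:ℝ)*s + (3-1)*w)*(2*w + (3-1)*s) := by
          linear_combination (u4*w)*hX1 - ((4:ℝ)*s + (3-1)*w)*hX4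
        have hfin : ((4:ℝ)*s + (3-1)*w)*(2*w + (3-1)*s) - (3:ℝ)^2*(s*w) = 8*(s + (3/16)*w)^2 + (119/32)*w^2 := by
          linear_combination (0)*hQ0
        linarith [hfin, hprod, hABle, sq_nonneg (s + (3/16)*w), hw2]
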